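/- The bound rank_B(I) ≤ rank_B(E(I)) is not tight: there exists a Boolean matrix I with rank_B(I) = 3 and rank_B(E(I)) = 4. Concretely, the 4×5 matrix I with rows (1,0,1,1,1), (0,1,1,0,1), (0,1,0,0,1), (1,0,1,1,0) has Boolean rank 3, while its essential part E(I), which has rows (0,0,0,0,1), (0,0,1,0,0), (0,1,0,0,0), (1,0,0,1,0), has Boolean rank 4. -/

import Mathlib

/-- `C↑`: attributes shared by all objects in `C`. -/
def up {n m : ℕ} (I : Fin n → Fin m → Bool) (C : Finset (Fin n)) : Finset (Fin m) :=
  Finset.univ.filter fun j => ∀ i ∈ C, I i j = true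

/-- `D↓`: objects sharing all attributes in `D`. -/
def dn {n m : ℕ} (I : Fin n → Fin m → Bool) (D : Finset (Fin m)) : Finset (Fin n) :=
  Finset.univ.filter fun i => ∀ j ∈ D, I i j = true

/-- A formal concept of `I`: a pair `⟨C,D⟩` with `C↑ = D` and `D↓ = C`. -/
def isConcept {n m : ℕ} (I : Fin n → Fin m → Bool)
    (p : Finset (Fin n) × Finset (Fin m)) : Prop :=
  up I p.1 = p.2 ∧ dn I p.2 = p.1

/-- The interval `[γ(C), μ(D)]` in the concept lattice of `I`
(concepts ordered by extent inclusion). -/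
def interval {n m : ℕ} (I : Fin n → Fin m → Bool)
    (C : Finset (Fin n)) (D : Finset (Fin m)) :
    Set (Finset (Fin n) × Finset (Fin m)) :=
  {p | isConcept I p ∧ dn I (up I C) ⊆ p.1 ∧ p.1 ⊆ dn I D}

/-- The Boolean matrix `A_F ∘ B_F` determined by a set `F` of concepts:
entry `(i,j)` is 1 iff some concept in `F` covers `(i,j)`. -/
def cov {n m : ℕ} (F : Finset (Finset (Fin n) × Finset (Fin m))) :
    Fin n → Fin m → Bool :=
  fun i j => decide (∃ p ∈ F, i ∈ p.1 ∧ j ∈ p.2)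

/-- The essential part `E(I)`: entry `(i,j)` is 1 iff the interval `I_{ij}` is
non-empty and inclusion-minimal among the non-empty intervals `I_{i'j'}`. -/
noncomputable def Ess {n m : ℕ} (I : Fin n → Fin m → Bool) : Fin n → Fin m → Bool :=
  fun i j =>
    @decide ((interval I {i} {j}).Nonempty ∧
      ∀ (i' : Fin n) (j' : Fin m), (interval I {i'} {j'}).Nonempty →
        interval I {i'} {j'} ⊆ interval I {i} {j} →
        interval I {i'} {j'} = interval I {i} {j})
      (Classical.propDecidable _)

/-- Boolean matrix product. -/
def bmul {n k m : ℕ} (A : Fin n → Fin k → Bool) (B : Fin k → Fin m → Bool) :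
    Fin n → Fin m → Bool := fun i j => decide (∃ l, A i l = true ∧ B l j = true)

/-- The Boolean (Schein) rank: the least `k` admitting a Boolean factorization
with inner dimension `k`. -/
noncomputable def rankB {n m : ℕ} (M : Fin n → Fin m → Bool) : ℕ :=
  sInf {k | ∃ (A : Fin n → Fin k → Bool) (B : Fin k → Fin m → Bool), M = bmul A B}

/-! ### Auxiliary lemmas: Galois connection and interval characterizations -/

section Galois
variable {n m : ℕ} (I : Fin n → Fin m → Bool)

lemma subset_dn_iff (C : Finset (Fin n)) (D : Finset (Fin m)) :
    C ⊆ dn I D ↔ D ⊆ up I C := by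
  constructor
  · intro h j hj
    simp only [up, Finset.mem_filter, Finset.mem_univ, true_and]
    intro i hi
    have := h hi
    simp only [dn, Finset.mem_filter, Finset.mem_univ, true_and] at this
    exact this j hj
  · intro h i hi
    simp only [dn, Finset.mem_filter, Finset.mem_univ, true_and]
    intro j hj
    have := h hj
    simp only [up, Finset.mem_filter, Finset.mem_univ, true_and] at this
    exact this i hi

lemma dn_anti {D D' : Finset (Fin m)} (h : D ⊆ D') : dn I D' ⊆ dn I D := by
  intro i hi
  simp only [dn, Finset.mem_filter, Finset.mem_univ, true_and] at *
  exact fun j hj => hi j (h hj)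

lemma subset_up_dn (D : Finset (Fin m)) : D ⊆ up I (dn I D) :=
  (subset_dn_iff I (dn I D) D).mp (subset_refl _)

lemma subset_dn_up (C : Finset (Fin n)) : C ⊆ dn I (up I C) :=
  (subset_dn_iff I C (up I C)).mpr (subset_refl _)

lemma dn_up_dn (D : Finset (Fin m)) : dn I (up I (dn I D)) = dn I D :=
  Finset.Subset.antisymm (dn_anti I (subset_up_dn I D)) (subset_dn_up I (dn I D))

lemma up_dn_up (C : Finset (Fin n)) : up I (dn I (up I C)) = up I C := by
  apply Finset.Subset.antisymm
  · intro j hj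
    simp only [up, Finset.mem_filter, Finset.mem_univ, true_and] at hj ⊢
    intro i hi
    exact (Finset.mem_filter.mp hj).2 i (subset_dn_up I C hi)
  · exact subset_up_dn I (up I C)

lemma gamma_isConcept (C : Finset (Fin n)) :
    isConcept I (dn I (up I C), up I C) :=
  ⟨up_dn_up I C, rfl⟩

lemma mu_isConcept (D : Finset (Fin m)) :
    isConcept I (dn I D, up I (dn I D)) :=
  ⟨rfl, dn_up_dn I D⟩

lemma interval_nonempty_iff (C : Finset (Fin n)) (D : Finset (Fin m)) :
    (interval I C D).Nonempty ↔ dn I (up I C) ⊆ dn I D := by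
  constructor
  · rintro ⟨p, hp, h1, h2⟩
    exact h1.trans h2
  · intro h
    exact ⟨(dn I (up I C), up I C), gamma_isConcept I C, subset_refl _, h⟩

lemma interval_subset_iff {C C' : Finset (Fin n)} {D D' : Finset (Fin m)}
    (h' : (interval I C' D').Nonempty) :
    interval I C' D' ⊆ interval I C D ↔
      dn I (up I C) ⊆ dn I (up I C') ∧ dn I D' ⊆ dn I D := by
  have hne : dn I (up I C') ⊆ dn I D' := (interval_nonempty_iff I C' D').mp h'
  constructor
  · intro hsub
    constructor
    · have hg : (dn I (up I C'), up I C') ∈ interval I C' D' :=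
        ⟨gamma_isConcept I C', subset_refl _, hne⟩
      exact (hsub hg).2.1
    · have hm : (dn I D', up I (dn I D')) ∈ interval I C' D' :=
        ⟨mu_isConcept I D', hne, subset_refl _⟩
      exact (hsub hm).2.2
  · rintro ⟨h1, h2⟩ p ⟨hc, hp1, hp2⟩
    exact ⟨hc, h1.trans hp1, hp2.trans h2⟩

/-- Characterization of entries of `Ess` in terms of finite computations. -/
lemma ess_eq_true_iff (i : Fin n) (j : Fin m) :
    Ess I i j = true ↔
      (dn I (up I {i}) ⊆ dn I {j} ∧
        ∀ (i' : Fin n) (j' : Fin m), dn I (up I {i'}) ⊆ dn I {j'} →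
          (dn I (up I {i}) ⊆ dn I (up I {i'}) ∧ dn I {j'} ⊆ dn I {j}) →
          (dn I (up I {i'}) ⊆ dn I (up I {i}) ∧ dn I {j} ⊆ dn I {j'})) := by
  have key : Ess I i j = true ↔ ((interval I {i} {j}).Nonempty ∧
      ∀ (i' : Fin n) (j' : Fin m), (interval I {i'} {j'}).Nonempty →
        interval I {i'} {j'} ⊆ interval I {i} {j} →
        interval I {i'} {j'} = interval I {i} {j}) :=
    ⟨fun h => @of_decide_eq_true _ (Classical.propDecidable _) h,
     fun h => @decide_eq_true _ (Classical.propDecidable _) h⟩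
  rw [key, interval_nonempty_iff]
  constructor
  · rintro ⟨h0, hmin⟩
    refine ⟨h0, ?_⟩
    intro i' j' hne' hsub
    have hne'' : (interval I {i'} {j'}).Nonempty := (interval_nonempty_iff I _ _).mpr hne'
    have hsub' : interval I {i'} {j'} ⊆ interval I {i} {j} :=
      (interval_subset_iff I hne'').mpr hsub
    have heq := hmin i' j' hne'' hsub'
    have hrev : interval I {i} {j} ⊆ interval I {i'} {j'} := heq ▸ subset_refl _
    exact (interval_subset_iff I ((interval_nonempty_iff I _ _).mpr h0)).mp hrev
  · rintro ⟨h0, hmin⟩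
    refine ⟨h0, ?_⟩
    intro i' j' hne' hsub
    have hne'' : dn I (up I {i'}) ⊆ dn I {j'} := (interval_nonempty_iff I _ _).mp hne'
    have hsub' := (interval_subset_iff I hne').mp hsub
    have hrev := hmin i' j' hne'' hsub'
    exact Set.Subset.antisymm hsub
      ((interval_subset_iff I ((interval_nonempty_iff I _ _).mpr h0)).mpr hrev)

end Galois

/-- Fooling-set lower bound for Boolean rank factorizations. -/
lemma fooling {n m k r : ℕ} (M : Fin n → Fin m → Bool)
    (A : Fin n → Fin k → Bool) (B : Fin k → Fin m → Bool) (h : M = bmul A B)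
    (s : Fin r → Fin n × Fin m)
    (h1 : ∀ t, M (s t).1 (s t).2 = true)
    (h2 : ∀ t t', t ≠ t' →
      M (s t).1 (s t').2 = false ∨ M (s t').1 (s t).2 = false) :
    r ≤ k := by
  have hex : ∀ t, ∃ l, A (s t).1 l = true ∧ B l (s t).2 = true := by
    intro t
    have ht := h1 t
    rw [h] at ht
    simpa [bmul] using ht
  choose f hf using hex
  have hcross : ∀ a b : Fin r, f a = f b → M (s a).1 (s b).2 = true := by
    intro a b hab
    rw [h]
    simp only [bmul, decide_eq_true_eq]
    exact ⟨f a, (hf a).1, hab ▸ (hf b).2⟩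
  have hinj : Function.Injective f := by
    intro t t' he
    by_contra hne
    rcases h2 t t' hne with hc | hc
    · rw [hcross t t' he] at hc; exact Bool.noConfusion hc
    · rw [hcross t' t he.symm] at hc; exact Bool.noConfusion hc
  simpa using Fintype.card_le_of_injective f hinj

theorem rankB_ess_bound_not_tight :
    ∃ I : Fin 4 → Fin 5 → Bool,
      (∀ i j, I i j = (!![true, false, true,  true,  true;
                         false, true, true,  false, true;
                         false, true, false, false, true;
                         true, false, true,  true,  false] : Matrix (Fin 4) (Fin 5) Bool) i j) ∧
      rankB I = 3 ∧
      (∀ i j, Ess I i j = (!![false, false, false, false, true;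
                              false, false, true,  false, false;
                              false, true,  false, false, false;
                              true,  false, false, true,  false] : Matrix (Fin 4) (Fin 5) Bool) i j) ∧
      rankB (Ess I) = 4 := by
  set Imat : Fin 4 → Fin 5 → Bool := fun i j =>
    (!![true, false, true,  true,  true;
        false, true, true,  false, true;
        false, true, false, false, true;
        true, false, true,  true,  false] : Matrix (Fin 4) (Fin 5) Bool) i j with hI
  have hfac3 : Imat = bmul
      (fun i l => !![true,false,true; false,true,true; false,true,false;
                     true,false,false] i l)
      (fun l j => !![true,false,true,true,false; false,true,false,false,true;
                     false,false,true,false,true] l j) := by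
    funext i j
    fin_cases i <;> fin_cases j <;> decide
  have hEss : ∀ i j, Ess Imat i j =
      (!![false, false, false, false, true;
          false, false, true,  false, false;
          false, true,  false, false, false;
          true,  false, false, true,  false] : Matrix (Fin 4) (Fin 5) Bool) i j := by
    intro i j
    fin_cases i <;> fin_cases j <;>
      first
        | exact (ess_eq_true_iff Imat _ _).mpr (by decide)
        | exact Bool.eq_false_iff.mpr
            (fun hc => absurd ((ess_eq_true_iff Imat _ _).mp hc) (by decide))
  refine ⟨Imat, fun i j => rfl, ?_, hEss, ?_⟩
  · -- rankB Imat = 3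
    apply le_antisymm
    · exact Nat.sInf_le ⟨_, _, hfac3⟩
    · refine le_csInf ⟨3, _, _, hfac3⟩ ?_
      rintro k ⟨A, B, hAB⟩
      exact fooling Imat A B hAB ![(0,0),(2,1),(1,2)] (by decide) (by decide)
  · -- rankB (Ess Imat) = 4
    have hE : Ess Imat = fun i j =>
        (!![false, false, false, false, true;
            false, false, true,  false, false;
            false, true,  false, false, false;
            true,  false, false, true,  false] : Matrix (Fin 4) (Fin 5) Bool) i j :=
      funext fun i => funext fun j => hEss i j
    rw [hE]
    have hfac4 : (fun i j =>
        (!![false, false, false, false, true;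
            false, false, true,  false, false;
            false, true,  false, false, false;
            true,  false, false, true,  false] : Matrix (Fin 4) (Fin 5) Bool) i j) = bmul
        (fun i l => decide (i = l))
        (fun i j =>
          (!![false, false, false, false, true;
              false, false, true,  false, false;
              false, true,  false, false, false;
              true,  false, false, true,  false] : Matrix (Fin 4) (Fin 5) Bool) i j) := by
      funext i j
      fin_cases i <;> fin_cases j <;> decide
    apply le_antisymm
    · exact Nat.sInf_le ⟨_, _, hfac4⟩
    · refine le_csInf ⟨4, _, _, hfac4⟩ ?_
      rintro k ⟨A, B, hAB⟩
      exact fooling _ A B hAB ![(0,4),(1,2),(2,1),(3,0)] (by decide) (by decide)
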